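/- Let n, k ≥ 1 be integers with n ≥ 10k and r ≥ 0. Let f̃ : ℝ → [0,∞) be a symmetric-r function, i.e., there exist a ∈ ℝ and an r-log-Lipschitz function f such that f̃(x) = f(|x − a|) for all x. Then for every subset X ⊆ {1,…,n} of size at least n/k with ∑_{x'∈X} f̃(x') > 0, and every x̃ ∈ {1,…,n}, we have f̃(x̃) / (∑_{x'∈X} f̃(x')) ≤ (10k)^{r+1} / n. -/
import Mathlib


theorem symmetric_r_sensitivity_on_subset (n k : ℕ) (hk : 1 ≤ k) (hn : 10 * k ≤ n)
    (r : ℝ) (hr : 0 ≤ r) (ftil : ℝ → ℝ)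
    (hsym : ∃ (a : ℝ) (f : ℝ → ℝ),
      (∀ x y, 0 ≤ x → x ≤ y → f x ≤ f y) ∧
      (∀ x, 0 ≤ x → 0 ≤ f x) ∧
      (∀ c x, 1 ≤ c → 0 ≤ x → f (c * x) ≤ c ^ r * f x) ∧
      (∀ x : ℝ, ftil x = f |x - a|))
    (X : Finset ℕ) (hX : X ⊆ Finset.Icc 1 n) (hXcard : (n : ℝ) / k ≤ X.card)
    (hpos : 0 < ∑ x' ∈ X, ftil x')
    (xt : ℕ) (hxt : xt ∈ Finset.Icc 1 n) :
    ftil xt / (∑ x' ∈ X, ftil x') ≤ (10 * k : ℝ) ^ (r + 1) / n := by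
  obtain ⟨a, f, hmono, hnn, hlip, heq⟩ := hsym
  have hk' : (1:ℝ) ≤ k := by exact_mod_cast hk
  have hn' : (10:ℝ) * k ≤ n := by exact_mod_cast hn
  have hkpos : (0:ℝ) < k := by linarith
  have hnpos : (0:ℝ) < n := by linarith
  set c : ℝ := 10 * k with hc
  have hc1 : (1:ℝ) ≤ c := by simp only [hc]; linarith
  have hcpos : (0:ℝ) < c := by linarith
  set d : ℝ := |(xt:ℝ) - a| with hd
  have hd0 : (0:ℝ) ≤ d := abs_nonneg _
  set t : ℝ := d / c with ht
  have ht0 : (0:ℝ) ≤ t := div_nonneg hd0 hcpos.le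
  set B := X.filter (fun x' : ℕ => |(x':ℝ) - a| < t) with hB
  set G := X.filter (fun x' : ℕ => ¬ |(x':ℝ) - a| < t) with hG
  -- card bound on B
  have hBcard : (B.card : ℝ) ≤ 2 * (n / (9*k)) + 1 := by
    rcases B.eq_empty_or_nonempty with h | ⟨b, hb⟩
    · simp only [h, Finset.card_empty, Nat.cast_zero]
      have : (0:ℝ) ≤ n / (9*k) := by positivity
      linarith
    · have hbX : b ∈ X := (Finset.mem_filter.mp hb).1
      have hbt : |(b:ℝ) - a| < t := (Finset.mem_filter.mp hb).2
      obtain ⟨hb1, hb2⟩ := Finset.mem_Icc.mp (hX hbX)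
      obtain ⟨hxt1, hxt2⟩ := Finset.mem_Icc.mp hxt
      have hb1' : (1:ℝ) ≤ b := by exact_mod_cast hb1
      have hb2' : (b:ℝ) ≤ n := by exact_mod_cast hb2
      have hxt1' : (1:ℝ) ≤ xt := by exact_mod_cast hxt1
      have hxt2' : (xt:ℝ) ≤ n := by exact_mod_cast hxt2
      have habs : |(xt:ℝ) - (b:ℝ)| ≤ (n:ℝ) - 1 := by
        rw [abs_le]; constructor <;> linarith
      have hdlt : d < ((n:ℝ) - 1) + t := by
        calc d = |((xt:ℝ) - b) + ((b:ℝ) - a)| := by rw [hd]; ring_nf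
        _ ≤ |(xt:ℝ) - b| + |(b:ℝ) - a| := abs_add_le _ _
        _ < ((n:ℝ) - 1) + t := by linarith
      have htlt : t ≤ (n:ℝ) / (9*k) := by
        -- d < n - 1 + d/c and c = 10k
        have hdc : d = c * t := by rw [ht]; field_simp
        have h1 : c * t < (n:ℝ) - 1 + t := by rw [← hdc]; exact hdlt
        have h2 : (c - 1) * t ≤ (n:ℝ) - 1 := by nlinarith
        have h3 : (9 * (k:ℝ)) * t ≤ (n:ℝ) := by nlinarith
        rw [le_div_iff₀ (by positivity : (0:ℝ) < 9*k)]
        linarith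
      -- card B ≤ 2t + 1
      have hsubI : ∀ x ∈ B, (x:ℤ) ∈ Finset.Icc ⌈a - t⌉ ⌊a + t⌋ := by
        intro x hx
        have hxt' : |(x:ℝ) - a| < t := (Finset.mem_filter.mp hx).2
        rw [abs_lt] at hxt'
        rw [Finset.mem_Icc]
        constructor
        · rw [Int.ceil_le]; push_cast; linarith [hxt'.1]
        · rw [Int.le_floor]; push_cast; linarith [hxt'.2]
      have hcard1 : B.card ≤ (Finset.Icc ⌈a - t⌉ ⌊a + t⌋).card :=
        Finset.card_le_card_of_injOn (fun x : ℕ => (x:ℤ)) hsubI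
          (fun x _ y _ h => Nat.cast_injective h)
      rw [Int.card_Icc] at hcard1
      have hcard2 : (B.card : ℝ) ≤ 2 * t + 1 := by
        have hfl : (⌊a + t⌋ : ℝ) ≤ a + t := Int.floor_le _
        have hce : a - t ≤ (⌈a - t⌉ : ℝ) := Int.le_ceil _
        rcases le_or_gt 0 (⌊a + t⌋ + 1 - ⌈a - t⌉) with hm | hm
        · have : ((⌊a + t⌋ + 1 - ⌈a - t⌉).toNat : ℤ) = ⌊a + t⌋ + 1 - ⌈a - t⌉ :=
            Int.toNat_of_nonneg hm
          have hb' : (B.card : ℤ) ≤ ⌊a + t⌋ + 1 - ⌈a - t⌉ := by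
            rw [← this]; exact_mod_cast hcard1
          have hb'' : (B.card : ℝ) ≤ (⌊a + t⌋ : ℝ) + 1 - (⌈a - t⌉ : ℝ) := by
            exact_mod_cast hb'
          linarith
        · have : (⌊a + t⌋ + 1 - ⌈a - t⌉).toNat = 0 := Int.toNat_of_nonpos hm.le
          rw [this] at hcard1
          interval_cases B.card
          simp; linarith
      linarith
  -- G is large
  have hsplit : B.card + G.card = X.card := Finset.card_filter_add_card_filter_not _
  have hu : (10:ℝ) ≤ (n:ℝ) / k := by rw [le_div_iff₀ hkpos]; linarith
  have hGcard : (n:ℝ) / c ≤ (G.card : ℝ) := by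
    have hGc : (G.card : ℝ) = (X.card : ℝ) - (B.card : ℝ) := by
      have := hsplit
      push_cast [← this]
      ring
    have e9 : (n:ℝ) / (9*k) = ((n:ℝ)/k) / 9 := by rw [div_div, mul_comm]
    have e10 : (n:ℝ) / c = ((n:ℝ)/k) / 10 := by rw [hc, div_div, mul_comm]
    rw [e10, hGc]
    rw [e9] at hBcard
    set u := (n:ℝ)/k
    linarith
  -- sum bound
  have hS : (G.card : ℝ) * f t ≤ ∑ x' ∈ X, ftil x' := by
    have hft0 : 0 ≤ f t := hnn t ht0
    calc (G.card : ℝ) * f t = ∑ _x' ∈ G, f t := by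
          rw [Finset.sum_const, nsmul_eq_mul]
    _ ≤ ∑ x' ∈ G, ftil x' := by
          apply Finset.sum_le_sum
          intro x hx
          rw [heq]
          exact hmono t _ ht0 (not_lt.mp (Finset.mem_filter.mp hx).2)
    _ ≤ ∑ x' ∈ X, ftil x' := by
          apply Finset.sum_le_sum_of_subset_of_nonneg (Finset.filter_subset _ _)
          intro x _ _
          rw [heq]
          exact hnn _ (abs_nonneg _)
  have hft0 : 0 ≤ f t := hnn t ht0
  have hcr0 : (0:ℝ) ≤ c ^ r := Real.rpow_nonneg hcpos.le r
  have hfd : ftil xt ≤ c ^ r * f t := by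
    rw [heq]
    have hdc : |(xt:ℝ) - a| = c * t := by rw [← hd, ht]; field_simp
    rw [hdc]
    exact hlip c t hc1 ht0
  have hnft : (n:ℝ) * f t ≤ c * (∑ x' ∈ X, ftil x') := by
    have h1 : ((n:ℝ) / c) * f t ≤ (G.card : ℝ) * f t :=
      mul_le_mul_of_nonneg_right hGcard hft0
    have h2 : ((n:ℝ) / c) * f t ≤ ∑ x' ∈ X, ftil x' := le_trans h1 hS
    calc (n:ℝ) * f t = c * (((n:ℝ) / c) * f t) := by field_simp
    _ ≤ c * (∑ x' ∈ X, ftil x') := by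
        exact mul_le_mul_of_nonneg_left h2 hcpos.le
  have hpow : c ^ (r + 1) = c ^ r * c := by
    rw [Real.rpow_add hcpos, Real.rpow_one]
  rw [div_le_div_iff₀ hpos hnpos, hpow]
  calc ftil xt * (n:ℝ) ≤ (c ^ r * f t) * n := by
        exact mul_le_mul_of_nonneg_right hfd hnpos.le
  _ = c ^ r * ((n:ℝ) * f t) := by ring
  _ ≤ c ^ r * (c * (∑ x' ∈ X, ftil x')) := mul_le_mul_of_nonneg_left hnft hcr0
  _ = c ^ r * c * (∑ x' ∈ X, ftil x') := by ring
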